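/- Let G be a finitely generated group. Then G_bound is contained in the FC-center FC(G): every element of G_bound has a finite conjugacy class in G. -/

import Mathlib

/-- A finite symmetric generating set of a group. -/
def IsSymmGen {G : Type*} [Group G] (S : Finset G) : Prop :=
  (∀ s ∈ S, s⁻¹ ∈ S) ∧ Subgroup.closure (S : Set G) = ⊤

/-- The word length of `g` with respect to `S`: the least `n` such that
`g` is a product of `n` elements of `S`. -/
noncomputable def wordLen {G : Type*} [Group G] (S : Finset G) (g : G) : ℕ :=
  sInf {n : ℕ | ∃ w : List G, (∀ s ∈ w, s ∈ S) ∧ w.length = n ∧ w.prod = g}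

/-- Elements of uniformly bounded word length. -/
def GBound (G : Type*) [Group G] : Set G :=
  {g | ∃ M : ℕ, 0 < M ∧ ∀ S : Finset G, IsSymmGen S → wordLen S g ≤ M}

lemma ball_finite {G : Type*} [Group G] (T : Finset G) (M : ℕ) :
    {g : G | ∃ w : List G, (∀ s ∈ w, s ∈ T) ∧ w.length ≤ M ∧ w.prod = g}.Finite := by
  classical
  have : {g : G | ∃ w : List G, (∀ s ∈ w, s ∈ T) ∧ w.length ≤ M ∧ w.prod = g} ⊆
      Set.range (fun f : Fin M → (insert (1:G) T : Finset G) =>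
        (List.ofFn (fun i => (f i : G))).prod) := by
    rintro g ⟨w, hw, hlen, rfl⟩
    set w' := w ++ List.replicate (M - w.length) (1 : G) with hw'
    have hlen' : w'.length = M := by
      simp [hw', Nat.add_sub_cancel' hlen]
    have hmem : ∀ s ∈ w', s ∈ (insert (1:G) T : Finset G) := by
      intro s hs
      rcases List.mem_append.1 hs with h | h
      · exact Finset.mem_insert_of_mem (hw s h)
      · simp [List.eq_of_mem_replicate h]
    have hmemget : ∀ i : Fin w'.length, w'.get i ∈ (insert (1:G) T : Finset G) :=
      fun i => hmem _ (List.get_mem _ _)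
    refine ⟨fun i => ⟨w'.get (Fin.cast hlen'.symm i), hmemget _⟩, ?_⟩
    have h2 : (List.ofFn fun i : Fin M => w'.get (Fin.cast hlen'.symm i)) = w' := by
      refine List.ext_get (by simp [hlen']) (fun i h1 h2 => ?_)
      simp
    simp only [h2]
    simp [hw']
  exact Set.Finite.subset (Set.finite_range _) this

lemma exists_word {G : Type*} [Group G] {S : Finset G} (hS : IsSymmGen S) (g : G) :
    ∃ w : List G, (∀ s ∈ w, s ∈ S) ∧ w.length = wordLen S g ∧ w.prod = g := by
  have hsub : (↑S : Set G)⁻¹ ⊆ ↑S := by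
    intro x hx
    have := hS.1 x⁻¹ (by simpa using hx)
    simpa using this
  have hg : g ∈ Submonoid.closure (↑S : Set G) := by
    have h1 : g ∈ (Subgroup.closure (↑S : Set G)).toSubmonoid := by
      rw [hS.2]; trivial
    rw [Subgroup.closure_toSubmonoid] at h1
    have : (↑S : Set G) ∪ (↑S)⁻¹ = ↑S := Set.union_eq_self_of_subset_right hsub
    rwa [this] at h1
  obtain ⟨l, hl, hp⟩ := Submonoid.exists_list_of_mem_closure hg
  have hne : {n : ℕ | ∃ w : List G, (∀ s ∈ w, s ∈ S) ∧ w.length = n ∧ w.prod = g}.Nonempty :=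
    ⟨l.length, l, hl, rfl, hp⟩
  exact Nat.sInf_mem hne

/-- `G_bound` is contained in the FC-center: every element of `G_bound` has a
finite conjugacy class. -/
theorem stmt5 (G : Type*) [Group G] [Group.FG G] :
    ∀ g ∈ GBound G, {h : G | ∃ c : G, c * g * c⁻¹ = h}.Finite := by
  classical
  rintro g ⟨M, -, hM⟩
  obtain ⟨n, S, -, hScl⟩ := (Group.fg_iff' (G := G)).mp ‹_›
  -- symmetrize
  set S0 : Finset G := S ∪ S.image (·⁻¹) with hS0
  have hS0symm : ∀ s ∈ S0, s⁻¹ ∈ S0 := by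
    intro s hs
    rcases Finset.mem_union.1 hs with h | h
    · exact Finset.mem_union_right _ (Finset.mem_image_of_mem _ h)
    · rcases Finset.mem_image.1 h with ⟨t, ht, rfl⟩
      simp only [inv_inv]
      exact Finset.mem_union_left _ ht
  have hS0cl : Subgroup.closure (↑S0 : Set G) = ⊤ := by
    rw [eq_top_iff, ← hScl]
    exact Subgroup.closure_mono (by simp [hS0, Set.subset_union_left])
  have hS0gen : IsSymmGen S0 := ⟨hS0symm, hS0cl⟩
  refine (ball_finite S0 M).subset ?_
  rintro h ⟨c, rfl⟩
  -- conjugated generating set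
  set T : Finset G := S0.image (fun s => c⁻¹ * s * c) with hT
  have hTsymm : ∀ s ∈ T, s⁻¹ ∈ T := by
    intro s hs
    rcases Finset.mem_image.1 hs with ⟨t, ht, rfl⟩
    refine Finset.mem_image.2 ⟨t⁻¹, hS0symm t ht, ?_⟩
    group
  have hTcl : Subgroup.closure (↑T : Set G) = ⊤ := by
    have himg : (↑T : Set G) = (MulAut.conj c⁻¹).toMonoidHom '' (↑S0 : Set G) := by
      ext x
      simp [hT, MulAut.conj_apply, mul_assoc]
    rw [himg, ← MonoidHom.map_closure, hS0cl]
    exact Subgroup.map_top_of_surjective _ (MulAut.conj c⁻¹).surjective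
  obtain ⟨w, hw, hwlen, hwprod⟩ := exists_word ⟨hTsymm, hTcl⟩ g
  have hwM : w.length ≤ M := hwlen ▸ hM T ⟨hTsymm, hTcl⟩
  refine ⟨w.map (fun s => c * s * c⁻¹), ?_, by simpa using hwM, ?_⟩
  · intro s hs
    rcases List.mem_map.1 hs with ⟨t, ht, rfl⟩
    rcases Finset.mem_image.1 (hw t ht) with ⟨u, hu, rfl⟩
    convert hu using 1
    group
  · have : (w.map (fun s => c * s * c⁻¹)).prod =
        (w.map (MulAut.conj c).toMonoidHom).prod := by
      congr 1
    rw [this, ← MonoidHom.map_list_prod, hwprod]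
    simp [MulAut.conj_apply, mul_assoc]
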